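/- In an asymptotic regime where d = n^κ for some κ > 0, |S₁| = d^γ with 0 < γ < 1, α = 2 log d, β ≍ (J+ε) log n and K = β + d + √(2βd), the sparse detection threshold V_S = 4δ log a + (β + |S₁|α) − |S₁| + 2√(δ log a(4δ log a + 2(β + |S₁|α) − |S₁|)) with a = max{n,d} satisfies V_S/(2|S₁| log d) → 1 as n → ∞, and the dense threshold V_D = 4δ log a + K − d + 2√(δ log a(4δ log a + 2K − d)) satisfies V_D/√(d log n) → c for some constant c > 0. Consequently, for large n, min{V_S, V_D} = V_S whenever γ < 1/2 and min{V_S, V_D} = V_D whenever γ > 1/2. -/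

import Mathlib

open Filter Real

set_option maxHeartbeats 1600000 in
/-- Asymptotic adaptivity of the SUBSET thresholds: with `d = n^κ`, `|S₁| = d^γ`,
`α = 2 log d`, `β = (J+ε) log n` and `K = β + d + √(2βd)`, the sparse threshold
`V_S` satisfies `V_S/(2|S₁| log d) → 1`, the dense threshold `V_D` satisfies
`V_D/√(d log n) → c` for some `c > 0`, and hence eventually
`min{V_S, V_D} = V_S` if `γ < 1/2` and `min{V_S, V_D} = V_D` if `γ > 1/2`. -/
theorem subset_thresholds_adaptivity
    (κ γ δ J ε : ℝ) (hκ : 0 < κ) (hγ0 : 0 < γ) (hγ1 : γ < 1)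
    (hδ : 0 < δ) (hJ : 0 < J) (hε : 0 < ε)
    (d s α β K a Vs Vd : ℕ → ℝ)
    (hd : ∀ n, d n = (n : ℝ) ^ κ)
    (hs : ∀ n, s n = d n ^ γ)
    (hα : ∀ n, α n = 2 * Real.log (d n))
    (hβ : ∀ n, β n = (J + ε) * Real.log n)
    (hK : ∀ n, K n = β n + d n + Real.sqrt (2 * β n * d n))
    (ha : ∀ n, a n = max (n : ℝ) (d n))
    (hVs : ∀ n, Vs n = 4 * δ * Real.log (a n) + (β n + s n * α n) - s n +
      2 * Real.sqrt (δ * Real.log (a n) *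
        (4 * δ * Real.log (a n) + 2 * (β n + s n * α n) - s n)))
    (hVd : ∀ n, Vd n = 4 * δ * Real.log (a n) + K n - d n +
      2 * Real.sqrt (δ * Real.log (a n) *
        (4 * δ * Real.log (a n) + 2 * K n - d n))) :
    Tendsto (fun n => Vs n / (2 * s n * Real.log (d n))) atTop (nhds 1) ∧
      (∃ c > (0:ℝ), Tendsto (fun n => Vd n / Real.sqrt (d n * Real.log n)) atTop
        (nhds c)) ∧
      (γ < 1/2 → ∀ᶠ n in atTop, min (Vs n) (Vd n) = Vs n) ∧
      (1/2 < γ → ∀ᶠ n in atTop, min (Vs n) (Vd n) = Vd n) := by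
  set m := max (1:ℝ) κ with hm_def
  have hm : 0 < m := lt_of_lt_of_le one_pos (le_max_left 1 κ)
  have hJε : (0:ℝ) < J + ε := by linarith
  -- basic limits
  have hN : Tendsto (fun n : ℕ => (n:ℝ)) atTop atTop := tendsto_natCast_atTop_atTop
  have hL : Tendsto (fun n : ℕ => Real.log n) atTop atTop :=
    Real.tendsto_log_atTop.comp hN
  have hpow : ∀ c : ℝ, 0 < c → Tendsto (fun n : ℕ => (n:ℝ) ^ c) atTop atTop :=
    fun c hc => (tendsto_rpow_atTop hc).comp hN
  have hu : ∀ c : ℝ, 0 < c → Tendsto (fun n : ℕ => Real.log n / (n:ℝ) ^ c) atTop (nhds 0) :=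
    fun c hc => ((isLittleO_log_rpow_atTop hc).tendsto_div_nhds_zero).comp hN
  have hinvpow : ∀ c : ℝ, 0 < c → Tendsto (fun n : ℕ => ((n:ℝ) ^ c)⁻¹) atTop (nhds 0) :=
    fun c hc => (hpow c hc).inv_tendsto_atTop
  have hinvlog : Tendsto (fun n : ℕ => (Real.log n)⁻¹) atTop (nhds 0) :=
    hL.inv_tendsto_atTop
  have hinvpl : ∀ c : ℝ, 0 < c →
      Tendsto (fun n : ℕ => ((n:ℝ) ^ c * Real.log n)⁻¹) atTop (nhds 0) :=
    fun c hc => ((hpow c hc).atTop_mul_atTop₀ hL).inv_tendsto_atTop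
  -- eventual pointwise structure
  have main : ∀ᶠ n : ℕ in atTop, 2 ≤ (n:ℝ) ∧ 1 ≤ Real.log n ∧ s n = (n:ℝ)^(κ*γ) ∧
      Real.log (d n) = κ * Real.log n ∧ Real.log (a n) = m * Real.log n := by
    filter_upwards [hN.eventually_ge_atTop 2, hL.eventually_ge_atTop 1] with n h2 h1
    have hN0 : (0:ℝ) < n := by linarith
    have hN1 : (1:ℝ) ≤ n := by linarith
    refine ⟨h2, h1, ?_, ?_, ?_⟩
    · rw [hs n, hd n]; exact (Real.rpow_mul hN0.le κ γ).symm
    · rw [hd n]; exact Real.log_rpow hN0 κ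
    · rw [ha n, hd n]
      rcases le_total κ 1 with h | h
      · have hle : (n:ℝ)^κ ≤ (n:ℝ) := by
          calc (n:ℝ)^κ ≤ (n:ℝ)^(1:ℝ) := Real.rpow_le_rpow_of_exponent_le hN1 h
          _ = n := Real.rpow_one _
        rw [max_eq_left hle, hm_def, max_eq_left h, one_mul]
      · have hle : (n:ℝ) ≤ (n:ℝ)^κ := by
          calc (n:ℝ) = (n:ℝ)^(1:ℝ) := (Real.rpow_one _).symm
          _ ≤ _ := Real.rpow_le_rpow_of_exponent_le hN1 h
        rw [max_eq_right hle, Real.log_rpow hN0, hm_def, max_eq_right h]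
  have hγκ : 0 < κ * γ := mul_pos hκ hγ0
  -- Part 1: the sparse threshold ratio tends to 1
  have part1 : Tendsto (fun n => Vs n / (2 * s n * Real.log (d n))) atTop (nhds 1) := by
    have hglim : Tendsto (fun n : ℕ => δ*m/κ^2 *
        ((4*δ*m + 2*(J+ε)) * (((n:ℝ) ^ (κ*γ))⁻¹)^2 + 4*κ*((n:ℝ) ^ (κ*γ))⁻¹
          - ((n:ℝ) ^ (κ*γ))⁻¹ * (Real.log n)⁻¹)) atTop (nhds 0) := by
      have h1 := hinvpow _ hγκ
      have := ((((h1.pow 2).const_mul (4*δ*m + 2*(J+ε))).add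
        (h1.const_mul (4*κ))).sub (h1.mul hinvlog)).const_mul (δ*m/κ^2)
      simpa only [zero_pow, mul_zero, add_zero, sub_zero, zero_mul, OfNat.ofNat_ne_zero,
        ne_eq, not_false_eq_true] using this
    have hRlim : Tendsto (fun n : ℕ => (4*δ*m + (J+ε))/(2*κ) * ((n:ℝ) ^ (κ*γ))⁻¹ + 1
        - (Real.log n)⁻¹/(2*κ)
        + Real.sqrt (δ*m/κ^2 *
        ((4*δ*m + 2*(J+ε)) * (((n:ℝ) ^ (κ*γ))⁻¹)^2 + 4*κ*((n:ℝ) ^ (κ*γ))⁻¹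
          - ((n:ℝ) ^ (κ*γ))⁻¹ * (Real.log n)⁻¹))) atTop (nhds 1) := by
      have := ((((hinvpow _ hγκ).const_mul ((4*δ*m + (J+ε))/(2*κ))).add_const 1).sub
        (hinvlog.div_const (2*κ))).add hglim.sqrt
      simpa only [mul_zero, zero_add, zero_div, sub_zero, Real.sqrt_zero, add_zero] using this
    refine Tendsto.congr' ?_ hRlim
    filter_upwards [main] with n hn
    obtain ⟨h2, h1, hsn, hlogd, hloga⟩ := hn
    have hN0 : (0:ℝ) < n := by linarith
    have hL0 : (0:ℝ) < Real.log n := by linarith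
    have hS0 : (0:ℝ) < (n:ℝ)^(κ*γ) := Real.rpow_pos_of_pos hN0 _
    rw [hVs n, hα n, hβ n, hsn, hloga, hlogd]
    have hXeq : δ * (m * Real.log n) * (4 * δ * (m * Real.log n) +
        2 * ((J+ε) * Real.log n + (n:ℝ)^(κ*γ) * (2 * (κ * Real.log n))) - (n:ℝ)^(κ*γ))
        = (κ * (n:ℝ)^(κ*γ) * Real.log n)^2 * (δ*m/κ^2 *
        ((4*δ*m + 2*(J+ε)) * (((n:ℝ) ^ (κ*γ))⁻¹)^2 + 4*κ*((n:ℝ) ^ (κ*γ))⁻¹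
          - ((n:ℝ) ^ (κ*γ))⁻¹ * (Real.log n)⁻¹)) := by
      field_simp [hS0.ne', hL0.ne', hκ.ne']
      ring
    rw [hXeq, Real.sqrt_mul (sq_nonneg _), Real.sqrt_sq (by positivity)]
    field_simp [hS0.ne', hL0.ne', hκ.ne']
    ring
  -- Part 2: the dense threshold ratio tends to a positive constant
  have part2 : Tendsto (fun n => Vd n / Real.sqrt (d n * Real.log n)) atTop
      (nhds (Real.sqrt (2*(J+ε)) + 2*Real.sqrt (δ*m))) := by
    have huk := hu κ hκ
    have hterm3 : Tendsto (fun n : ℕ => δ*m*((4*δ*m+2*(J+ε)) * (Real.log n / (n:ℝ)^κ) + 1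
        + 2*Real.sqrt (2*(J+ε)*(Real.log n / (n:ℝ)^κ)))) atTop (nhds (δ*m)) := by
      have := (((huk.const_mul (4*δ*m+2*(J+ε))).add_const 1).add
        (((huk.const_mul (2*(J+ε))).sqrt).const_mul 2)).const_mul (δ*m)
      simpa only [mul_zero, zero_add, Real.sqrt_zero, add_zero, mul_one] using this
    have hRlim : Tendsto (fun n : ℕ => (4*δ*m + (J+ε)) * Real.sqrt (Real.log n / (n:ℝ)^κ)
        + Real.sqrt (2*(J+ε))
        + 2*Real.sqrt (δ*m*((4*δ*m+2*(J+ε)) * (Real.log n / (n:ℝ)^κ) + 1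
          + 2*Real.sqrt (2*(J+ε)*(Real.log n / (n:ℝ)^κ))))) atTop
        (nhds (Real.sqrt (2*(J+ε)) + 2*Real.sqrt (δ*m))) := by
      have := ((huk.sqrt.const_mul (4*δ*m+(J+ε))).add_const (Real.sqrt (2*(J+ε)))).add
        ((hterm3.sqrt).const_mul 2)
      simpa only [Real.sqrt_zero, mul_zero, zero_add] using this
    refine Tendsto.congr' ?_ hRlim
    filter_upwards [main] with n hn
    obtain ⟨h2, h1, hsn, hlogd, hloga⟩ := hn
    have hN0 : (0:ℝ) < n := by linarith
    have hL0 : (0:ℝ) < Real.log n := by linarith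
    have hD0 : (0:ℝ) < (n:ℝ)^κ := Real.rpow_pos_of_pos hN0 _
    have hDL0 : (0:ℝ) < (n:ℝ)^κ * Real.log n := mul_pos hD0 hL0
    have hP0 : (0:ℝ) < Real.sqrt ((n:ℝ)^κ * Real.log n) := Real.sqrt_pos.mpr hDL0
    rw [hVd n, hK n, hβ n, hloga, hd n]
    have h2Jε : (0:ℝ) ≤ 2 * ((J+ε) * Real.log n) * (n:ℝ)^κ :=
      mul_nonneg (mul_nonneg (by norm_num) (mul_nonneg hJε.le hL0.le)) hD0.le
    have hw : Real.sqrt (2 * ((J+ε) * Real.log n) * (n:ℝ)^κ)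
        = Real.sqrt (2*(J+ε)) * Real.sqrt ((n:ℝ)^κ * Real.log n) := by
      rw [← Real.sqrt_mul (by linarith : (0:ℝ) ≤ 2*(J+ε))]
      congr 1; ring
    have hwu : Real.sqrt (2*(J+ε)*(Real.log n / (n:ℝ)^κ))
        = Real.sqrt (2 * ((J+ε) * Real.log n) * (n:ℝ)^κ) / (n:ℝ)^κ := by
      rw [show 2*(J+ε)*(Real.log n / (n:ℝ)^κ)
          = (2 * ((J+ε) * Real.log n) * (n:ℝ)^κ) / ((n:ℝ)^κ)^2 by field_simp,
        Real.sqrt_div h2Jε, Real.sqrt_sq hD0.le]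
    have hup : Real.sqrt (Real.log n / (n:ℝ)^κ)
        = Real.log n / Real.sqrt ((n:ℝ)^κ * Real.log n) := by
      rw [show Real.log n / (n:ℝ)^κ = (Real.log n)^2 / ((n:ℝ)^κ * Real.log n) by
          field_simp [hL0.ne'],
        Real.sqrt_div (sq_nonneg _), Real.sqrt_sq hL0.le]
    have hinner : δ * (m * Real.log n) * (4 * δ * (m * Real.log n) +
        2 * ((J+ε) * Real.log n + (n:ℝ)^κ + Real.sqrt (2 * ((J+ε) * Real.log n) * (n:ℝ)^κ))
        - (n:ℝ)^κ)
        = ((n:ℝ)^κ * Real.log n) * (δ*m*((4*δ*m+2*(J+ε)) * (Real.log n / (n:ℝ)^κ) + 1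
        + 2*Real.sqrt (2*(J+ε)*(Real.log n / (n:ℝ)^κ)))) := by
      rw [hwu]
      field_simp
      ring
    rw [hinner, Real.sqrt_mul hDL0.le, hw, hup]
    field_simp
    ring
  set c := Real.sqrt (2*(J+ε)) + 2*Real.sqrt (δ*m) with hc_def
  have hc : 0 < c := by
    have h1 : 0 < Real.sqrt (2*(J+ε)) := Real.sqrt_pos.mpr (by linarith)
    have h2 : 0 ≤ Real.sqrt (δ*m) := Real.sqrt_nonneg _
    rw [hc_def]; linarith
  refine ⟨part1, ⟨c, hc, part2⟩, ?_, ?_⟩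
  -- Part 3: sparse regime
  · intro hhalf
    have hc' : 0 < κ*(1-2*γ) := mul_pos hκ (by linarith)
    have hR3 : Tendsto (fun n : ℕ =>
        2*κ*Real.sqrt (Real.log n / (n:ℝ)^(κ*(1-2*γ)))) atTop (nhds 0) := by
      simpa using ((hu _ hc').sqrt.const_mul (2*κ))
    have heq3 : ∀ᶠ n : ℕ in atTop,
        (Vs n / (2 * s n * Real.log (d n))) *
          (2*κ*Real.sqrt (Real.log n / (n:ℝ)^(κ*(1-2*γ))))
        = Vs n / Real.sqrt (d n * Real.log n) := by
      filter_upwards [main] with n hn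
      obtain ⟨h2, h1, hsn, hlogd, hloga⟩ := hn
      have hN0 : (0:ℝ) < n := by linarith
      have hL0 : (0:ℝ) < Real.log n := by linarith
      have hS0 : (0:ℝ) < (n:ℝ)^(κ*γ) := Real.rpow_pos_of_pos hN0 _
      have hD0 : (0:ℝ) < (n:ℝ)^κ := Real.rpow_pos_of_pos hN0 _
      have hC0 : (0:ℝ) < (n:ℝ)^(κ*(1-2*γ)) := Real.rpow_pos_of_pos hN0 _
      have hP0 : (0:ℝ) < Real.sqrt ((n:ℝ)^κ * Real.log n) :=
        Real.sqrt_pos.mpr (mul_pos hD0 hL0)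
      have hsplit : (n:ℝ)^(κ*γ) * ((n:ℝ)^(κ*γ) * (n:ℝ)^(κ*(1-2*γ))) = (n:ℝ)^κ := by
        rw [← Real.rpow_add hN0, ← Real.rpow_add hN0]; congr 1; ring
      have hfrac : Real.sqrt (Real.log n / (n:ℝ)^(κ*(1-2*γ)))
          = ((n:ℝ)^(κ*γ) * Real.log n) / Real.sqrt ((n:ℝ)^κ * Real.log n) := by
        rw [show Real.log n / (n:ℝ)^(κ*(1-2*γ))
            = ((n:ℝ)^(κ*γ) * Real.log n)^2 / ((n:ℝ)^κ * Real.log n) by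
          rw [← hsplit]; field_simp,
          Real.sqrt_div (sq_nonneg _), Real.sqrt_sq (by positivity)]
      rw [hsn, hlogd, hd n, hfrac]
      field_simp
    have hVsDd : Tendsto (fun n => Vs n / Real.sqrt (d n * Real.log n)) atTop (nhds 0) :=
      Tendsto.congr' heq3 (by simpa using part1.mul hR3)
    filter_upwards [hVsDd.eventually_lt part2 hc, main] with n hlt hn
    obtain ⟨h2, h1, hsn, hlogd, hloga⟩ := hn
    have hN0 : (0:ℝ) < n := by linarith
    have hL0 : (0:ℝ) < Real.log n := by linarith
    have hDd0 : (0:ℝ) < Real.sqrt (d n * Real.log n) := by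
      rw [hd n]; exact Real.sqrt_pos.mpr (mul_pos (Real.rpow_pos_of_pos hN0 _) hL0)
    exact min_eq_left ((div_lt_div_iff_of_pos_right hDd0).mp hlt).le
  -- Part 4: dense regime
  · intro hhalf
    have hc'' : 0 < κ*(2*γ-1) := mul_pos hκ (by linarith)
    have hR4 : Tendsto (fun n : ℕ =>
        1/(2*κ)*Real.sqrt (((n:ℝ)^(κ*(2*γ-1)) * Real.log n)⁻¹)) atTop (nhds 0) := by
      simpa using ((hinvpl _ hc'').sqrt.const_mul (1/(2*κ)))
    have heq4 : ∀ᶠ n : ℕ in atTop,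
        (Vd n / Real.sqrt (d n * Real.log n)) *
          (1/(2*κ)*Real.sqrt (((n:ℝ)^(κ*(2*γ-1)) * Real.log n)⁻¹))
        = Vd n / (2 * s n * Real.log (d n)) := by
      filter_upwards [main] with n hn
      obtain ⟨h2, h1, hsn, hlogd, hloga⟩ := hn
      have hN0 : (0:ℝ) < n := by linarith
      have hL0 : (0:ℝ) < Real.log n := by linarith
      have hS0 : (0:ℝ) < (n:ℝ)^(κ*γ) := Real.rpow_pos_of_pos hN0 _
      have hD0 : (0:ℝ) < (n:ℝ)^κ := Real.rpow_pos_of_pos hN0 _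
      have hC0 : (0:ℝ) < (n:ℝ)^(κ*(2*γ-1)) := Real.rpow_pos_of_pos hN0 _
      have hP0 : (0:ℝ) < Real.sqrt ((n:ℝ)^κ * Real.log n) :=
        Real.sqrt_pos.mpr (mul_pos hD0 hL0)
      have hsplit : (n:ℝ)^κ = (n:ℝ)^(κ*γ) * (n:ℝ)^(κ*γ) * ((n:ℝ)^(κ*(2*γ-1)))⁻¹ := by
        rw [← Real.rpow_neg hN0.le, ← Real.rpow_add hN0, ← Real.rpow_add hN0]
        congr 1; ring
      have hfrac : Real.sqrt (((n:ℝ)^(κ*(2*γ-1)) * Real.log n)⁻¹)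
          = Real.sqrt ((n:ℝ)^κ * Real.log n) / ((n:ℝ)^(κ*γ) * Real.log n) := by
        rw [show ((n:ℝ)^(κ*(2*γ-1)) * Real.log n)⁻¹
            = ((n:ℝ)^κ * Real.log n) / (((n:ℝ)^(κ*γ)) * Real.log n)^2 by
          rw [hsplit]; field_simp,
          Real.sqrt_div (mul_pos hD0 hL0).le, Real.sqrt_sq (by positivity)]
      rw [hsn, hlogd, hd n, hfrac]
      field_simp
    have hVdDs : Tendsto (fun n => Vd n / (2 * s n * Real.log (d n))) atTop (nhds 0) :=
      Tendsto.congr' heq4 (by simpa using part2.mul hR4)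
    filter_upwards [hVdDs.eventually_lt part1 one_pos, main] with n hlt hn
    obtain ⟨h2, h1, hsn, hlogd, hloga⟩ := hn
    have hN0 : (0:ℝ) < n := by linarith
    have hL0 : (0:ℝ) < Real.log n := by linarith
    have hDs0 : (0:ℝ) < 2 * s n * Real.log (d n) := by
      rw [hsn, hlogd]
      have : (0:ℝ) < (n:ℝ)^(κ*γ) := Real.rpow_pos_of_pos hN0 _
      positivity
    exact min_eq_right ((div_lt_div_iff_of_pos_right hDs0).mp hlt).le
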